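/- Let K be a convex body in ℝ^n, let j ∈ {1, …, n}, and let L be an i-dimensional lattice plane of ℤ^n with i ≥ j (i.e. an i-dimensional linear subspace of ℝ^n spanned by vectors of ℤ^n). Then μ_j(K) ≥ μ_j(K|L, ℤ^n|L), where K|L and ℤ^n|L denote the orthogonal projections of K and ℤ^n onto L, and μ_j(K|L, ℤ^n|L) is the j-th covering minimum computed inside the i-dimensional space L, namely min{μ > 0 : (μ(K|L) + ℤ^n|L) ∩ M ≠ ∅ for every (i−j)-dimensional affine subspace M of L}. -/

import Mathlib

open MeasureTheory Pointwise

/-- The `j`-th covering minimum of a set `K` with respect to a lattice `Λ` inside an ambient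
finite-dimensional real inner product space `V`: the least `μ > 0` such that `μK + Λ` meets
every affine subspace of `V` of dimension `dim V - j`. -/
noncomputable def covMinGen {V : Type*} [NormedAddCommGroup V] [InnerProductSpace ℝ V]
    (j : ℕ) (K Λ : Set V) : ℝ :=
  sInf {μ : ℝ | 0 < μ ∧ ∀ L : AffineSubspace ℝ V,
    (L : Set V).Nonempty →
    Module.finrank ℝ L.direction = Module.finrank ℝ V - j →
    ((μ • K + Λ) ∩ (L : Set V)).Nonempty}

/-- The integer lattice `ℤⁿ` viewed as a subset of `ℝⁿ`. -/
def intLattice (n : ℕ) : Set (EuclideanSpace ℝ (Fin n)) :=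
  {x | ∀ j, ∃ m : ℤ, x j = (m : ℝ)}

/-- Any point of `ℝⁿ` is within distance `√n / 2` of the integer lattice. -/
lemma exists_intLattice_close (n : ℕ) (y : EuclideanSpace ℝ (Fin n)) :
    ∃ l ∈ intLattice n, ‖y - l‖ ≤ Real.sqrt n / 2 := by
  set l : EuclideanSpace ℝ (Fin n) := WithLp.toLp 2 (fun k => (round (y k) : ℝ)) with hldef
  refine ⟨l, fun k => ⟨round (y k), rfl⟩, ?_⟩
  have hcoord : ∀ k : Fin n, ‖(y - l) k‖ ^ 2 ≤ (1 : ℝ) / 4 := by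
    intro k
    have h1 : |y k - (round (y k) : ℝ)| ≤ 1 / 2 := abs_sub_round (y k)
    have h2 : (y - l) k = y k - (round (y k) : ℝ) := rfl
    rw [h2, Real.norm_eq_abs]
    nlinarith [abs_nonneg (y k - (round (y k) : ℝ))]
  have hnorm : ‖y - l‖ ≤ Real.sqrt ((n : ℝ) / 4) := by
    rw [EuclideanSpace.norm_eq]
    apply Real.sqrt_le_sqrt
    calc (∑ k : Fin n, ‖(y - l) k‖ ^ 2)
        ≤ ∑ _k : Fin n, (1 : ℝ) / 4 := Finset.sum_le_sum fun k _ => hcoord k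
      _ = (n : ℝ) / 4 := by simp; ring
  have h4 : Real.sqrt ((n : ℝ) / 4) = Real.sqrt n / 2 := by
    rw [show (n : ℝ) / 4 = n * (1 / 2) ^ 2 by ring,
      Real.sqrt_mul (by positivity), Real.sqrt_sq (by norm_num)]
    ring
  rw [h4] at hnorm
  exact hnorm

/-- Let `K` be a convex body in `ℝⁿ`, `1 ≤ j ≤ i ≤ n`, and let `L` be an `i`-dimensional
lattice plane of `ℤⁿ` (an `i`-dimensional linear subspace spanned by integer vectors).
Then `μ_j(K) ≥ μ_j(K|L, ℤⁿ|L)`, where `K|L` and `ℤⁿ|L` are the orthogonal projections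
onto `L` and the covering minimum on the right is computed inside `L`. -/
theorem covMin_ge_covMin_proj (n : ℕ) (hn : 1 ≤ n) (K : Set (EuclideanSpace ℝ (Fin n)))
    (hKcpt : IsCompact K) (hKconv : Convex ℝ K) (hKint : (interior K).Nonempty)
    (j i : ℕ) (hj1 : 1 ≤ j) (hji : j ≤ i) (hin : i ≤ n)
    (L : Submodule ℝ (EuclideanSpace ℝ (Fin n)))
    (hLdim : Module.finrank ℝ L = i)
    (hLlat : ∃ s ⊆ intLattice n, L = Submodule.span ℝ s) :
    covMinGen j K (intLattice n) ≥
      covMinGen j ((L.orthogonalProjectionOnto) '' K) ((L.orthogonalProjectionOnto) '' intLattice n) := by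
  classical
  rw [ge_iff_le]
  unfold covMinGen
  have hfsurj : Function.Surjective ((L.orthogonalProjectionOnto).toLinearMap) := fun y =>
    ⟨(y : EuclideanSpace ℝ (Fin n)), Submodule.orthogonalProjectionOnto_mem_subspace_eq_self y⟩
  apply csInf_le_csInf
  · exact ⟨0, fun μ hμ => le_of_lt hμ.1⟩
  · -- the ambient admissible set is nonempty
    obtain ⟨c, hc⟩ := hKint
    obtain ⟨r, hr, hball⟩ := Metric.isOpen_iff.mp isOpen_interior c hc
    refine ⟨Real.sqrt n / (2 * r) + 1, by positivity, fun L' hL'ne _ => ?_⟩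
    set μ₀ : ℝ := Real.sqrt n / (2 * r) + 1 with hμ₀
    have hμ₀pos : 0 < μ₀ := by positivity
    obtain ⟨y, hy⟩ := hL'ne
    refine ⟨y, ?_, hy⟩
    obtain ⟨l, hl, hdist⟩ := exists_intLattice_close n (y - μ₀ • c)
    have hsum : (y - l) + l = y := sub_add_cancel y l
    refine ⟨y - l, ?_, l, hl, hsum⟩
    have hmem : μ₀⁻¹ • (y - l) ∈ K := by
      apply interior_subset
      apply hball
      rw [Metric.mem_ball, dist_eq_norm]
      have key : ‖μ₀⁻¹ • (y - l) - c‖ = μ₀⁻¹ * ‖(y - μ₀ • c) - l‖ := by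
        rw [show μ₀⁻¹ • (y - l) - c = μ₀⁻¹ • ((y - μ₀ • c) - l) by
          rw [smul_sub, smul_sub, smul_sub, smul_smul, inv_mul_cancel₀ (ne_of_gt hμ₀pos), one_smul]; abel,
          norm_smul, Real.norm_eq_abs, abs_of_pos (inv_pos.mpr hμ₀pos)]
      rw [key]
      have h1 : μ₀⁻¹ * ‖(y - μ₀ • c) - l‖ ≤ μ₀⁻¹ * (Real.sqrt n / 2) :=
        mul_le_mul_of_nonneg_left hdist (le_of_lt (inv_pos.mpr hμ₀pos))
      refine lt_of_le_of_lt h1 ?_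
      rw [inv_mul_lt_iff₀ hμ₀pos, hμ₀]
      have hs : (0:ℝ) ≤ Real.sqrt n := Real.sqrt_nonneg n
      have hexp : (Real.sqrt n / (2 * r) + 1) * r = Real.sqrt n / 2 + r := by
        field_simp
      rw [hexp]
      linarith
    refine ⟨μ₀⁻¹ • (y - l), hmem, ?_⟩
    show μ₀ • (μ₀⁻¹ • (y - l)) = y - l
    rw [smul_smul, mul_inv_cancel₀ (ne_of_gt hμ₀pos), one_smul]
  · -- the ambient admissible set is contained in the projected one
    rintro μ ⟨hμpos, hμ⟩
    refine ⟨hμpos, fun M hMne hMdim => ?_⟩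
    obtain ⟨p, hp⟩ := hMne
    set f : EuclideanSpace ℝ (Fin n) →ₗ[ℝ] L := (L.orthogonalProjectionOnto).toLinearMap with hf
    set D : Submodule ℝ (EuclideanSpace ℝ (Fin n)) := M.direction.comap f with hD
    set M' : AffineSubspace ℝ (EuclideanSpace ℝ (Fin n)) :=
      AffineSubspace.mk' ((p : L) : EuclideanSpace ℝ (Fin n)) D with hM'
    have hfp : f ((p : L) : EuclideanSpace ℝ (Fin n)) = p :=
      Submodule.orthogonalProjectionOnto_mem_subspace_eq_self p
    have hDdim : Module.finrank ℝ D = n - j := by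
      have hker : LinearMap.ker ((M.direction.mkQ).comp f) = D := by
        rw [LinearMap.ker_comp, Submodule.ker_mkQ]
      have hrange : LinearMap.range ((M.direction.mkQ).comp f) = ⊤ := by
        rw [LinearMap.range_eq_top]
        exact (Submodule.mkQ_surjective _).comp hfsurj
      have h1 := LinearMap.finrank_range_add_finrank_ker ((M.direction.mkQ).comp f)
      rw [hker, hrange, finrank_top] at h1
      have h2 := Submodule.finrank_quotient_add_finrank M.direction
      have h3 : Module.finrank ℝ (EuclideanSpace ℝ (Fin n)) = n := finrank_euclideanSpace_fin
      rw [hLdim] at hMdim h2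
      rw [h3] at h1
      omega
    have hM'dim : Module.finrank ℝ M'.direction
        = Module.finrank ℝ (EuclideanSpace ℝ (Fin n)) - j := by
      rw [hM', AffineSubspace.direction_mk', hDdim,
        show Module.finrank ℝ (EuclideanSpace ℝ (Fin n)) = n from finrank_euclideanSpace_fin]
    obtain ⟨x, hxmem, hxM'⟩ := hμ M' ⟨_, AffineSubspace.self_mem_mk' _ _⟩ hM'dim
    obtain ⟨a, ha, b, hb, hab⟩ := hxmem
    obtain ⟨k, hk, hka⟩ := ha
    have hka' : μ • k = a := hka
    have hab' : a + b = x := hab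
    refine ⟨f x, ⟨μ • f k, Set.smul_mem_smul_set ⟨k, hk, rfl⟩, f b, ⟨b, hb, rfl⟩, ?_⟩, ?_⟩
    · show μ • f k + f b = f x
      rw [← hab', ← hka', map_add, LinearMap.map_smul]
    · have hxD : x - (p : L) ∈ D := by
        have hsub := (AffineSubspace.mem_mk').mp hxM'
        simpa using hsub
      have hfx : f x - p ∈ M.direction := by
        rw [hD, Submodule.mem_comap, map_sub, hfp] at hxD
        exact hxD
      have hfin : (f x - p) +ᵥ p ∈ M := AffineSubspace.vadd_mem_of_mem_direction hfx hp
      simpa using hfin
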